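/- Let $(V_n)$ be Banach spaces with contractive connecting maps $\Phi_{n,n+1}: V_{n+1}\to V_n$, and suppose each $V_n = W_n^*$ is a dual Banach space with the adjoint relation: there are contractions $\Theta_{n+1,n}: W_n \to W_{n+1}$ with $\Phi_{n,n+1} = \Theta_{n+1,n}^*$. Let $W_\infty$ denote the algebraic inductive limit vector space of the $W_n$ along the $\Theta_{n+1,n}$, with canonical maps $\Theta_{\infty,n}:W_n\to W_\infty$, and equip it with the seminorm $\|\Theta_{\infty,n}(f)\| := \lim_{m\to\infty}\|\Theta_{m,n}(f)\|$ (the limit exists since the sequence is nonincreasing). Then for every bounded coherent sequence $\omega = (\omega_n) \in \mathcal{L}$ (projective limit as above), the formula $\iota(\omega)(\Theta_{\infty,n}(f)) := \omega_n(f)$ gives a well-defined linear functional on $W_\infty$ bounded with respect to the seminorm, and the resulting map $\iota : \mathcal{L} \to (W_\infty)^*$ is a linear isometry: $\|\iota(\omega)\| = \sup_n \|\omega_n\|$. -/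
import Mathlib


/-- Iterated connecting map `Θ_{m,n} = Θ_{m,m-1} ∘ ⋯ ∘ Θ_{n+1,n}` (and `0` if `m < n`). -/
noncomputable def chainMap {W : ℕ → Type*} [∀ n, Zero (W n)]
    (Θ : ∀ n, W n → W (n + 1)) (n m : ℕ) (f : W n) : W m :=
  if h : n ≤ m then Nat.leRecOn h (fun {k} x => Θ k x) f else 0

lemma chainMap_self {W : ℕ → Type*} [∀ n, Zero (W n)]
    (Θ : ∀ n, W n → W (n + 1)) (n : ℕ) (f : W n) : chainMap Θ n n f = f := by
  simp [chainMap, Nat.leRecOn_self]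

lemma chainMap_succ {W : ℕ → Type*} [∀ n, Zero (W n)]
    (Θ : ∀ n, W n → W (n + 1)) {n m : ℕ} (h : n ≤ m) (f : W n) :
    chainMap Θ n (m + 1) f = Θ m (chainMap Θ n m f) := by
  simp only [chainMap, dif_pos h, dif_pos (h.trans (Nat.le_succ m))]
  exact Nat.leRecOn_succ h f

/-- for a projective sequence of duals of an inductive sequence of normed
spaces along contractions `Θₙ`, every bounded coherent sequence of functionals
`ω = (ωₙ)` induces a well-defined functional `ι(ω)` on the inductive limit, bounded for
the limit seminorm `‖Θ_{∞,n}(f)‖ = lim_m ‖Θ_{m,n}(f)‖ = inf_k ‖Θ_{n+k,n}(f)‖`, and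
`ι` is isometric: `‖ι(ω)‖ = supₙ ‖ωₙ‖`. -/
theorem dual_projective_limit_isometric_embedding
    (W : ℕ → Type*) [∀ n, NormedAddCommGroup (W n)] [∀ n, NormedSpace ℂ (W n)]
    (Θ : ∀ n, W n →L[ℂ] W (n + 1)) (hΘ : ∀ n, ‖Θ n‖ ≤ 1)
    (ω : ∀ n, W n →L[ℂ] ℂ)
    (hcoh : ∀ (n : ℕ) (f : W n), ω n f = ω (n + 1) (Θ n f))
    (C₀ : ℝ) (hbdd : ∀ n, ‖ω n‖ ≤ C₀) :
    -- coherence along iterated connecting maps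
    (∀ (n m : ℕ), n ≤ m → ∀ f : W n,
      ω m (chainMap (fun k => (Θ k : W k → W (k + 1))) n m f) = ω n f) ∧
    -- well-definedness of ι(ω) on the inductive limit
    (∀ (n n' m : ℕ), n ≤ m → n' ≤ m → ∀ (f : W n) (f' : W n'),
      chainMap (fun k => (Θ k : W k → W (k + 1))) n m f
          = chainMap (fun k => (Θ k : W k → W (k + 1))) n' m f' →
      ω n f = ω n' f') ∧
    -- boundedness for the limit seminorm, with constant supₙ ‖ωₙ‖
    (∀ (n : ℕ) (f : W n),
      ‖ω n f‖ ≤ (⨆ m, ‖ω m‖) *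
        ⨅ k : ℕ, ‖chainMap (fun j => (Θ j : W j → W (j + 1))) n (n + k) f‖) ∧
    -- isometry: supₙ ‖ωₙ‖ is the best such constant
    (∀ C : ℝ, 0 ≤ C →
      (∀ (n : ℕ) (f : W n),
        ‖ω n f‖ ≤ C *
          ⨅ k : ℕ, ‖chainMap (fun j => (Θ j : W j → W (j + 1))) n (n + k) f‖) →
      ∀ m, ‖ω m‖ ≤ C) := by
  set Θ' : ∀ k, W k → W (k + 1) := fun k => (Θ k : W k → W (k + 1)) with hΘ'
  have part1 : ∀ (n m : ℕ), n ≤ m → ∀ f : W n, ω m (chainMap Θ' n m f) = ω n f := by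
    intro n m h f
    induction m, h using Nat.le_induction with
    | base => rw [chainMap_self]
    | succ m hm ih =>
      rw [chainMap_succ Θ' hm f, ← hcoh m (chainMap Θ' n m f), ih]
  have hS_bdd : BddAbove (Set.range fun m => ‖ω m‖) := ⟨C₀, by rintro x ⟨m, rfl⟩; exact hbdd m⟩
  have hS_le : ∀ m, ‖ω m‖ ≤ ⨆ m, ‖ω m‖ := fun m => le_ciSup hS_bdd m
  refine ⟨part1, ?_, ?_, ?_⟩
  · intro n n' m h h' f f' heq
    rw [← part1 n m h f, ← part1 n' m h' f', heq]
  · intro n f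
    set S := ⨆ m, ‖ω m‖ with hS
    have hS0 : 0 ≤ S := le_trans (norm_nonneg _) (hS_le n)
    have key : ∀ k : ℕ, ‖ω n f‖ ≤ S * ‖chainMap Θ' n (n + k) f‖ := by
      intro k
      calc ‖ω n f‖ = ‖ω (n + k) (chainMap Θ' n (n + k) f)‖ := by
            rw [part1 n (n + k) (Nat.le_add_right n k) f]
        _ ≤ ‖ω (n + k)‖ * ‖chainMap Θ' n (n + k) f‖ := (ω (n + k)).le_opNorm _
        _ ≤ S * ‖chainMap Θ' n (n + k) f‖ :=
            mul_le_mul_of_nonneg_right (hS_le (n + k)) (norm_nonneg _)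
    rcases eq_or_lt_of_le hS0 with hS0' | hS0'
    · have := key 0
      rw [← hS0'] at this ⊢
      simpa using this
    · rw [mul_comm, ← div_le_iff₀ hS0']
      refine le_ciInf fun k => ?_
      rw [div_le_iff₀ hS0', mul_comm]
      exact key k
  · intro C hC hbound m
    refine (ω m).opNorm_le_bound hC fun f => ?_
    have h1 := hbound m f
    have h2 : (⨅ k : ℕ, ‖chainMap Θ' m (m + k) f‖) ≤ ‖f‖ := by
      have := ciInf_le (f := fun k : ℕ => ‖chainMap Θ' m (m + k) f‖)
        ⟨0, by rintro x ⟨k, rfl⟩; exact norm_nonneg _⟩ 0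
      simpa [chainMap_self] using this
    exact h1.trans (mul_le_mul_of_nonneg_left h2 hC)
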